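/- If a permutation w ∈ S_n contains the pattern 3412 exactly once (i.e., there is exactly one 4-element index set realizing 3412) and avoids the pattern 321, then w avoids all 21 of the following patterns: 24531, 25314, 25341, 34512, 34521, 35412, 35421, 42531, 45123, 45213, 45231, 45312, 52314, 52341, 53124, 53142, 53412, 53421, 54123, 54213, 54231. -/
import Mathlib


/-- Build a permutation of `Fin 5` from its one-line notation (0-indexed values). -/
noncomputable def mk5 (v : Fin 5 → Fin 5) (h : Function.Bijective v := by decide) :
    Equiv.Perm (Fin 5) := Equiv.ofBijective v h

/-- `w` contains the pattern `σ`. -/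
def ContainsPat {n k : ℕ} (w : Equiv.Perm (Fin n)) (σ : Equiv.Perm (Fin k)) : Prop :=
  ∃ f : Fin k ↪o Fin n, ∀ a b : Fin k, σ a < σ b ↔ w (f a) < w (f b)

/-- `w` contains the pattern 3412 at the index set given by `f`. -/
def Occ3412 {n : ℕ} (w : Equiv.Perm (Fin n)) (f : Fin 4 ↪o Fin n) : Prop :=
  w (f 2) < w (f 3) ∧ w (f 3) < w (f 0) ∧ w (f 0) < w (f 1)

/-- `w` avoids the pattern 321. -/
def Avoids321 {n : ℕ} (w : Equiv.Perm (Fin n)) : Prop :=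
  ¬ ∃ i j k : Fin n, i < j ∧ j < k ∧ w k < w j ∧ w j < w i

lemma lemA {n : ℕ} (w : Equiv.Perm (Fin n)) (h2 : Avoids321 w) (σ : Equiv.Perm (Fin 5))
    (i j k : Fin 5) (hij : i < j) (hjk : j < k) (hk : σ k < σ j) (hj : σ j < σ i) :
    ¬ ContainsPat w σ := fun ⟨f, hf⟩ =>
  h2 ⟨f i, f j, f k, f.strictMono hij, f.strictMono hjk, (hf k j).mp hk, (hf j i).mp hj⟩

lemma lemB {n : ℕ} (w : Equiv.Perm (Fin n)) (h1 : ∃! f : Fin 4 ↪o Fin n, Occ3412 w f)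
    (σ : Equiv.Perm (Fin 5)) (g1 g2 : Fin 4 ↪o Fin 5) (a : Fin 4) (hne : g1 a ≠ g2 a)
    (o1 : σ (g1 2) < σ (g1 3) ∧ σ (g1 3) < σ (g1 0) ∧ σ (g1 0) < σ (g1 1))
    (o2 : σ (g2 2) < σ (g2 3) ∧ σ (g2 3) < σ (g2 0) ∧ σ (g2 0) < σ (g2 1)) :
    ¬ ContainsPat w σ := by
  rintro ⟨f, hf⟩
  obtain ⟨f0, -, huniq⟩ := h1
  have e1 : g1.trans f = f0 :=
    huniq _ ⟨(hf _ _).mp o1.1, (hf _ _).mp o1.2.1, (hf _ _).mp o1.2.2⟩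
  have e2 : g2.trans f = f0 :=
    huniq _ ⟨(hf _ _).mp o2.1, (hf _ _).mp o2.2.1, (hf _ _).mp o2.2.2⟩
  have h : f (g1 a) = f (g2 a) :=
    congrArg (fun g => (g : Fin 4 ↪o Fin n) a) (e1.trans e2.symm)
  exact hne (f.injective h)

def emb5 (v : Fin 4 → Fin 5) (h : StrictMono v := by decide) : Fin 4 ↪o Fin 5 :=
  OrderEmbedding.ofStrictMono v h

/-- If `w` contains the pattern 3412 exactly once and avoids the pattern 321,
then `w` avoids all 21 listed patterns. -/
theorem stmt3 {n : ℕ} (w : Equiv.Perm (Fin n))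
    (h1 : ∃! f : Fin 4 ↪o Fin n, Occ3412 w f) (h2 : Avoids321 w) :
    ∀ σ ∈ [mk5 ![1,3,4,2,0], mk5 ![1,4,2,0,3], mk5 ![1,4,2,3,0], mk5 ![2,3,4,0,1],
           mk5 ![2,3,4,1,0], mk5 ![2,4,3,0,1], mk5 ![2,4,3,1,0], mk5 ![3,1,4,2,0],
           mk5 ![3,4,0,1,2], mk5 ![3,4,1,0,2], mk5 ![3,4,1,2,0], mk5 ![3,4,2,0,1],
           mk5 ![4,1,2,0,3], mk5 ![4,1,2,3,0], mk5 ![4,2,0,1,3], mk5 ![4,2,0,3,1],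
           mk5 ![4,2,3,0,1], mk5 ![4,2,3,1,0], mk5 ![4,3,0,1,2], mk5 ![4,3,1,0,2],
           mk5 ![4,3,1,2,0]],
      ¬ ContainsPat w σ := by
  intro σ hσ
  simp only [List.mem_cons, List.not_mem_nil, or_false] at hσ
  rcases hσ with rfl|rfl|rfl|rfl|rfl|rfl|rfl|rfl|rfl|rfl|rfl|rfl|rfl|rfl|rfl|rfl|rfl|rfl|rfl|rfl|rfl
  · exact lemA w h2 _ 1 3 4 (by decide) (by decide) (by decide) (by decide)
  · exact lemA w h2 _ 1 2 3 (by decide) (by decide) (by decide) (by decide)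
  · exact lemA w h2 _ 1 2 4 (by decide) (by decide) (by decide) (by decide)
  · exact lemB w h1 _ (emb5 ![0,1,3,4]) (emb5 ![0,2,3,4]) 1 (by decide)
      ⟨by decide, by decide, by decide⟩ ⟨by decide, by decide, by decide⟩
  · exact lemA w h2 _ 2 3 4 (by decide) (by decide) (by decide) (by decide)
  · exact lemA w h2 _ 1 2 3 (by decide) (by decide) (by decide) (by decide)
  · exact lemA w h2 _ 1 2 3 (by decide) (by decide) (by decide) (by decide)
  · exact lemA w h2 _ 0 3 4 (by decide) (by decide) (by decide) (by decide)
  · exact lemB w h1 _ (emb5 ![0,1,2,3]) (emb5 ![0,1,2,4]) 3 (by decide)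
      ⟨by decide, by decide, by decide⟩ ⟨by decide, by decide, by decide⟩
  · exact lemA w h2 _ 0 2 3 (by decide) (by decide) (by decide) (by decide)
  · exact lemA w h2 _ 1 3 4 (by decide) (by decide) (by decide) (by decide)
  · exact lemA w h2 _ 1 2 3 (by decide) (by decide) (by decide) (by decide)
  · exact lemA w h2 _ 0 1 3 (by decide) (by decide) (by decide) (by decide)
  · exact lemA w h2 _ 0 1 4 (by decide) (by decide) (by decide) (by decide)
  · exact lemA w h2 _ 0 1 2 (by decide) (by decide) (by decide) (by decide)
  · exact lemA w h2 _ 0 1 2 (by decide) (by decide) (by decide) (by decide)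
  · exact lemA w h2 _ 0 1 3 (by decide) (by decide) (by decide) (by decide)
  · exact lemA w h2 _ 0 1 3 (by decide) (by decide) (by decide) (by decide)
  · exact lemA w h2 _ 0 1 2 (by decide) (by decide) (by decide) (by decide)
  · exact lemA w h2 _ 0 1 2 (by decide) (by decide) (by decide) (by decide)
  · exact lemA w h2 _ 0 1 2 (by decide) (by decide) (by decide) (by decide)
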